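/- Let A be symmetric positive definite and N symmetric with λ_min(N) > -λ_min(A), and β = (λ_min(N)+λ_max(N))/2. Then the spectral radius of I - (A + βI)⁻¹(A + N) is strictly less than 1. -/

import Mathlib

open Matrix
open scoped ComplexOrder

section helpers
variable {m : Type*} [Fintype m] [DecidableEq m]

lemma shift_psd {X : Matrix m m ℝ} (hX : X.IsHermitian)
    {c : ℝ} (h : ∀ i, c ≤ hX.eigenvalues i) : (X - c • 1).PosSemidef := by
  have hU : (hX.eigenvectorUnitary : Matrix m m ℝ) *
      star (hX.eigenvectorUnitary : Matrix m m ℝ) = 1 :=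
    Matrix.mem_unitaryGroup_iff.mp hX.eigenvectorUnitary.2
  have h1 : Matrix.diagonal (fun i => hX.eigenvalues i - c)
      = Matrix.diagonal (RCLike.ofReal ∘ hX.eigenvalues) - c • 1 := by
    rw [smul_one_eq_diagonal, ← Matrix.diagonal_sub]; rfl
  have key : X - c • 1 = (hX.eigenvectorUnitary : Matrix m m ℝ) *
      Matrix.diagonal (fun i => hX.eigenvalues i - c) *
      (hX.eigenvectorUnitary : Matrix m m ℝ)ᴴ := by
    rw [← star_eq_conjTranspose, h1, Matrix.mul_sub, Matrix.sub_mul, mul_smul_comm,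
      mul_one, smul_mul_assoc, hU, ← Unitary.conjStarAlgAut_apply (S := ℝ), ← hX.spectral_theorem]
  rw [key]
  exact (Matrix.posSemidef_diagonal_iff.mpr fun i =>
    sub_nonneg.mpr (h i)).mul_mul_conjTranspose_same _

lemma shift_psd' {X : Matrix m m ℝ} (hX : X.IsHermitian)
    {c : ℝ} (h : ∀ i, hX.eigenvalues i ≤ c) : (c • 1 - X).PosSemidef := by
  have hU : (hX.eigenvectorUnitary : Matrix m m ℝ) *
      star (hX.eigenvectorUnitary : Matrix m m ℝ) = 1 :=
    Matrix.mem_unitaryGroup_iff.mp hX.eigenvectorUnitary.2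
  have h1 : Matrix.diagonal (fun i => c - hX.eigenvalues i)
      = c • 1 - Matrix.diagonal (RCLike.ofReal ∘ hX.eigenvalues) := by
    rw [smul_one_eq_diagonal, ← Matrix.diagonal_sub]; rfl
  have key : c • 1 - X = (hX.eigenvectorUnitary : Matrix m m ℝ) *
      Matrix.diagonal (fun i => c - hX.eigenvalues i) *
      (hX.eigenvectorUnitary : Matrix m m ℝ)ᴴ := by
    rw [← star_eq_conjTranspose, h1, Matrix.mul_sub, Matrix.sub_mul, mul_smul_comm,
      mul_one, smul_mul_assoc, hU, ← Unitary.conjStarAlgAut_apply (S := ℝ), ← hX.spectral_theorem]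
  rw [key]
  exact (Matrix.posSemidef_diagonal_iff.mpr fun i =>
    sub_nonneg.mpr (h i)).mul_mul_conjTranspose_same _

omit [DecidableEq m] in
lemma psd_map {X : Matrix m m ℝ} (hX : X.PosSemidef) :
    (X.map Complex.ofReal).PosSemidef := by
  classical
  open scoped MatrixOrder in
  obtain ⟨B, rfl⟩ := CStarAlgebra.nonneg_iff_eq_star_mul_self.mp hX.nonneg
  rw [star_eq_conjTranspose]
  have : (Bᴴ * B).map Complex.ofReal
      = (B.map Complex.ofReal)ᴴ * (B.map Complex.ofReal) := by
    ext i j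
    simp [Matrix.mul_apply, Matrix.conjTranspose_apply, Complex.conj_ofReal]
  rw [this]
  exact Matrix.posSemidef_conjTranspose_mul_self _

end helpers

noncomputable def lamMin {n : ℕ} [NeZero n] {A : Matrix (Fin n) (Fin n) ℝ}
    (hA : A.IsHermitian) : ℝ :=
  Finset.univ.inf' Finset.univ_nonempty hA.eigenvalues

noncomputable def lamMax {n : ℕ} [NeZero n] {A : Matrix (Fin n) (Fin n) ℝ}
    (hA : A.IsHermitian) : ℝ :=
  Finset.univ.sup' Finset.univ_nonempty hA.eigenvalues

/-- With `A` SPD, `N` symmetric, `λ_min(N) > -λ_min(A)` and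
`β = (λ_min(N)+λ_max(N))/2`, the spectral radius of `I - (A + βI)⁻¹(A + N)` is `< 1`,
i.e. every complex eigenvalue has absolute value `< 1`. -/
theorem spectralRadius_lt_one {n : ℕ} [NeZero n]
    (A N : Matrix (Fin n) (Fin n) ℝ)
    (hA : A.PosDef) (hN : N.IsHermitian)
    (hNA : -lamMin hA.1 < lamMin hN)
    (β : ℝ) (hβ : β = (lamMin hN + lamMax hN) / 2) :
    ∀ μ ∈ spectrum ℂ
        (((1 : Matrix (Fin n) (Fin n) ℝ) - (A + β • 1)⁻¹ * (A + N)).map Complex.ofReal),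
      ‖μ‖ < 1 := by
  intro μ hμ
  classical
  set c := lamMin hA.1 with hc
  set mN := lamMin hN with hmN
  set MN := lamMax hN with hMN
  have hcle : ∀ i, c ≤ hA.1.eigenvalues i := fun i => Finset.inf'_le _ (Finset.mem_univ i)
  have hmle : ∀ i, mN ≤ hN.eigenvalues i := fun i => Finset.inf'_le _ (Finset.mem_univ i)
  have hMge : ∀ i, hN.eigenvalues i ≤ MN := fun i => Finset.le_sup' _ (Finset.mem_univ i)
  have hmM : mN ≤ MN := le_trans (hmle ⟨0, Nat.pos_of_ne_zero (NeZero.ne n)⟩)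
    (hMge ⟨0, Nat.pos_of_ne_zero (NeZero.ne n)⟩)
  have hβm : mN ≤ β := by rw [hβ]; linarith
  have hcm : 0 < c + mN := by linarith [hNA]
  have hcβ : 0 < c + β := by linarith
  -- positive semidefinite shifts
  have PA : (A - c • 1).PosSemidef := shift_psd hA.1 hcle
  have PN1 : (N - mN • 1).PosSemidef := shift_psd hN hmle
  have PN2 : (MN • 1 - N).PosSemidef := shift_psd' hN hMge
  set B : Matrix (Fin n) (Fin n) ℝ := A + β • 1 with hB
  have hBpd : B.PosDef := by
    have hsp : B = (A - c • 1) + (c + β) • 1 := by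
      rw [hB, add_smul]; abel
    rw [hsp]
    refine Matrix.PosDef.posSemidef_add PA ?_
    rw [smul_one_eq_diagonal]
    exact Matrix.posDef_diagonal_iff.mpr fun _ => hcβ
  have hBinv : B * B⁻¹ = 1 :=
    Matrix.mul_nonsing_inv _ (isUnit_iff_ne_zero.mpr hBpd.det_pos.ne')
  have hRkey : B * ((1 : Matrix (Fin n) (Fin n) ℝ) - B⁻¹ * (A + N)) = β • 1 - N := by
    rw [Matrix.mul_sub, Matrix.mul_one, ← Matrix.mul_assoc, hBinv, Matrix.one_mul, hB]
    abel
  -- eigenvector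
  rw [spectrum.mem_iff, Algebra.algebraMap_eq_smul_one] at hμ
  set Mc := ((1 : Matrix (Fin n) (Fin n) ℝ) - B⁻¹ * (A + N)).map Complex.ofReal with hMc
  have hdet : (μ • 1 - Mc).det = 0 := by
    by_contra hd
    exact hμ ((Matrix.isUnit_iff_isUnit_det _).mpr (isUnit_iff_ne_zero.mpr hd))
  obtain ⟨v, hv0, hv⟩ := (Matrix.exists_mulVec_eq_zero_iff).mpr hdet
  have hvec : Mc *ᵥ v = μ • v := by
    rw [Matrix.sub_mulVec, smul_mulVec, Matrix.one_mulVec, sub_eq_zero] at hv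
    exact hv.symm
  set Φ := fun X : Matrix (Fin n) (Fin n) ℝ => X.map Complex.ofReal with hΦ
  have hΦmul : ∀ X Y : Matrix (Fin n) (Fin n) ℝ, Φ (X * Y) = Φ X * Φ Y := by
    intro X Y; ext i j; simp [hΦ, Matrix.mul_apply]
  have hΦsub : ∀ X Y : Matrix (Fin n) (Fin n) ℝ, Φ (X - Y) = Φ X - Φ Y := by
    intro X Y; ext i j; simp [hΦ]
  have hΦadd : ∀ X Y : Matrix (Fin n) (Fin n) ℝ, Φ (X + Y) = Φ X + Φ Y := by
    intro X Y; ext i j; simp [hΦ]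
  have hΦsm : ∀ r : ℝ, Φ (r • 1) = (r : ℂ) • 1 := by
    intro r; ext i j
    simp [hΦ, Matrix.one_apply, apply_ite Complex.ofReal]
  have hvec2 : Φ (β • 1 - N) *ᵥ v = μ • (Φ B *ᵥ v) := by
    calc Φ (β • 1 - N) *ᵥ v = Φ (B * (1 - B⁻¹ * (A + N))) *ᵥ v := by rw [hRkey]
    _ = Φ B *ᵥ (Mc *ᵥ v) := by rw [hΦmul, Matrix.mulVec_mulVec]
    _ = Φ B *ᵥ (μ • v) := by rw [hvec]
    _ = μ • (Φ B *ᵥ v) := by rw [Matrix.mulVec_smul]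
  -- quadratic forms
  set T : ℂ := star v ⬝ᵥ v with hT
  set zA : ℂ := star v ⬝ᵥ (Φ A *ᵥ v) with hzA
  set zN : ℂ := star v ⬝ᵥ (Φ N *ᵥ v) with hzN
  have hTnn : 0 ≤ T := dotProduct_star_self_nonneg v
  have hTim : T.im = 0 := (Complex.nonneg_iff.mp hTnn).2.symm
  have hTre : 0 < T.re := by
    rcases lt_or_eq_of_le (Complex.nonneg_iff.mp hTnn).1 with h | h
    · exact h
    · exfalso
      exact hv0 (dotProduct_star_self_eq_zero.mp
        (Complex.ext h.symm hTim))
  have qf_shift : ∀ (X : Matrix (Fin n) (Fin n) ℝ) (r : ℝ),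
      star v ⬝ᵥ (Φ (X - r • 1) *ᵥ v) = (star v ⬝ᵥ (Φ X *ᵥ v)) - (r : ℂ) * T := by
    intro X r
    rw [hΦsub, hΦsm, Matrix.sub_mulVec, smul_mulVec, Matrix.one_mulVec,
      dotProduct_sub, dotProduct_smul, smul_eq_mul]
  have hA1 := psd_map PA |>.dotProduct_mulVec_nonneg v
  have hN1 := psd_map PN1 |>.dotProduct_mulVec_nonneg v
  have hN2 := psd_map PN2 |>.dotProduct_mulVec_nonneg v
  rw [qf_shift A c] at hA1
  rw [qf_shift N mN] at hN1
  have hsub' : MN • (1 : Matrix (Fin n) (Fin n) ℝ) - N = -(N - MN • 1) := by abel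
  have hN2' : star v ⬝ᵥ (Φ (MN • 1 - N) *ᵥ v) = (MN : ℂ) * T - zN := by
    rw [hsub']
    have : Φ (-(N - MN • 1)) = -Φ (N - MN • 1) := by ext i j; simp [hΦ]
    rw [this, Matrix.neg_mulVec, dotProduct_neg, qf_shift N MN]
    ring
  rw [hN2'] at hN2
  -- real/imaginary extraction
  obtain ⟨hA1re, hA1im⟩ := Complex.nonneg_iff.mp hA1
  obtain ⟨hN1re, hN1im⟩ := Complex.nonneg_iff.mp hN1
  obtain ⟨hN2re, hN2im⟩ := Complex.nonneg_iff.mp hN2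
  have hzAim : zA.im = 0 := by
    have := hA1im.symm
    simpa [Complex.sub_im, Complex.mul_im, hTim] using this
  have hzNim : zN.im = 0 := by
    have := hN1im.symm
    simpa [Complex.sub_im, Complex.mul_im, hTim] using this
  set t := T.re with ht
  set aR := zA.re with haR
  set nR := zN.re with hnR
  have haB : c * t ≤ aR := by
    have : 0 ≤ zA.re - (c * T.re - 0 * T.im) := by
      simpa [Complex.sub_re, Complex.mul_re] using hA1re
    simpa using this
  have hnB1 : mN * t ≤ nR := by
    have : 0 ≤ zN.re - (mN * T.re - 0 * T.im) := by
      simpa [Complex.sub_re, Complex.mul_re] using hN1re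
    simpa using this
  have hnB2 : nR ≤ MN * t := by
    have : 0 ≤ (MN * T.re - 0 * T.im) - zN.re := by
      simpa [Complex.sub_re, Complex.mul_re] using hN2re
    simpa using this
  -- main equation
  have hq : ((β * t - nR : ℝ) : ℂ) = μ * ((aR + β * t : ℝ) : ℂ) := by
    have hL : star v ⬝ᵥ (Φ (β • 1 - N) *ᵥ v) = ((β * t - nR : ℝ) : ℂ) := by
      have h1 : Φ (β • 1 - N) = (β : ℂ) • 1 - Φ N := by rw [hΦsub, hΦsm]
      rw [h1, Matrix.sub_mulVec, smul_mulVec, Matrix.one_mulVec,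
        dotProduct_sub, dotProduct_smul, smul_eq_mul, ← hT, ← hzN]
      apply Complex.ext <;>
        simp [Complex.sub_re, Complex.sub_im, Complex.mul_re, Complex.mul_im, hTim,
          hzNim, ht, hnR]
    have hR : star v ⬝ᵥ (Φ B *ᵥ v) = ((aR + β * t : ℝ) : ℂ) := by
      have h1 : Φ B = Φ A + (β : ℂ) • 1 := by rw [hB, hΦadd, hΦsm]
      rw [h1, Matrix.add_mulVec, smul_mulVec, Matrix.one_mulVec,
        dotProduct_add, dotProduct_smul, smul_eq_mul, ← hT, ← hzA]
      apply Complex.ext <;>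
        simp [Complex.add_re, Complex.add_im, Complex.mul_re, Complex.mul_im, hTim,
          hzAim, ht, haR]
    calc ((β * t - nR : ℝ) : ℂ) = star v ⬝ᵥ (Φ (β • 1 - N) *ᵥ v) := hL.symm
    _ = star v ⬝ᵥ (μ • (Φ B *ᵥ v)) := by rw [hvec2]
    _ = μ * (star v ⬝ᵥ (Φ B *ᵥ v)) := by rw [dotProduct_smul, smul_eq_mul]
    _ = μ * ((aR + β * t : ℝ) : ℂ) := by rw [hR]
  set q : ℝ := aR + β * t with hqdef
  have e1 : (c + β) * t = c * t + β * t := by ring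
  have e2 : (c + mN) * t = c * t + mN * t := by ring
  have e3 : β * t = (mN * t + MN * t) / 2 := by rw [hβ]; ring
  have hqpos : 0 < q := by
    have := mul_pos hcβ hTre
    rw [hqdef]; linarith
  have habs : |β * t - nR| = ‖μ‖ * q := by
    have h := congrArg norm hq
    rwa [Complex.norm_real, norm_mul, Complex.norm_real, Real.norm_eq_abs, Real.norm_eq_abs,
      abs_of_pos hqpos] at h
  have hlt : |β * t - nR| < q := by
    have hp := mul_pos hcm hTre
    rw [abs_lt, hqdef]
    constructor <;> linarith
  rw [habs] at hlt
  have h1q : ‖μ‖ * q < 1 * q := by linarith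
  exact lt_of_mul_lt_mul_right h1q hqpos.le
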